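/- Let W be a non-symmetrizable (maximum error) AVC with finite alphabets. Then there exists a binary quantizer Q : Y → {0,1} (a stochastic map) such that the quantized AVC Q ∘ W is still non-symmetrizable under the maximum error criterion; i.e., for some x ≠ x', conv{Q(w(·|x,s)) : s∈S} ∩ conv{Q(w(·|x',s)) : s∈S} = ∅. -/

import Mathlib

/-- For a non-symmetrizable (maximum error) AVC there exists a binary stochastic
quantizer `Q : Y → P({0,1})` such that the quantized AVC is still non-symmetrizable
under the maximum error criterion. -/
theorem stmt_16 (X S Y : Type) [Fintype X] [Fintype S] [Fintype Y]
    (w : X → S → Y → ℝ)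
    (hpos : ∀ x s y, 0 ≤ w x s y) (hsum : ∀ x s, ∑ y, w x s y = 1)
    (hns : ∃ x x' : X, x ≠ x' ∧
      convexHull ℝ (Set.range fun s : S => w x s) ∩
        convexHull ℝ (Set.range fun s : S => w x' s) = ∅) :
    ∃ Q : Y → Fin 2 → ℝ, (∀ y b, 0 ≤ Q y b) ∧ (∀ y, ∑ b, Q y b = 1) ∧
      ∃ x x' : X, x ≠ x' ∧
        convexHull ℝ (Set.range fun s : S => fun b : Fin 2 => ∑ y, w x s y * Q y b) ∩
          convexHull ℝ (Set.range fun s : S => fun b : Fin 2 => ∑ y, w x' s y * Q y b)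
          = ∅ := by
  classical
  obtain ⟨x, x', hxx, hdisj⟩ := hns
  by_cases hS : Nonempty S
  swap
  · haveI : IsEmpty S := not_nonempty_iff.mp hS
    refine ⟨fun _ b => if b = 0 then 1 else 0, ?_, ?_, x, x', hxx, ?_⟩
    · intro y b
      show (0:ℝ) ≤ if b = 0 then 1 else 0
      split <;> norm_num
    · intro y; simp [Fin.sum_univ_two]
    · simp [Set.range_eq_empty]
  -- main case: S nonempty
  obtain ⟨s0⟩ := hS
  haveI hY : Nonempty Y := by
    by_contra h
    haveI := not_nonempty_iff.mp h
    have := hsum x s0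
    simp at this
  -- the two convex hulls
  set A := convexHull ℝ (Set.range fun s : S => w x s) with hA
  set B := convexHull ℝ (Set.range fun s : S => w x' s) with hB
  have hAc : IsCompact A := (Set.finite_range _).isCompact_convexHull (𝕜 := ℝ)
  have hBc : IsCompact B := (Set.finite_range _).isCompact_convexHull (𝕜 := ℝ)
  have hdis : Disjoint A B := Set.disjoint_iff_inter_eq_empty.mpr hdisj
  obtain ⟨f, u, v, hfA, huv, hfB⟩ :=
    geometric_hahn_banach_compact_closed (convex_convexHull ℝ _) hAc
      (convex_convexHull ℝ _) hBc.isClosed hdis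
  set g : Y → ℝ := fun y => f (Pi.single y 1) with hg
  have hrep : ∀ p : Y → ℝ, f p = ∑ y, p y * g y := by
    intro p
    have hp : p = ∑ y, p y • (Pi.single y (1 : ℝ) : Y → ℝ) := by
      ext j
      simp [Pi.single_apply, Finset.sum_apply]
    calc f p = f (∑ y, p y • (Pi.single y (1 : ℝ) : Y → ℝ)) := by rw [← hp]
      _ = ∑ y, p y * g y := by
          rw [map_sum]; simp [hg, smul_eq_mul]
  -- elements of the hulls sum to 1
  have hsum1 : ∀ p : Y → ℝ, p ∈ A ∪ B → ∑ y, p y = 1 := by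
    intro p hp
    have hsub : A ∪ B ⊆ {q : Y → ℝ | ∑ y, q y = 1} := by
      apply Set.union_subset <;>
      · apply convexHull_min
        · rintro _ ⟨s, rfl⟩; exact hsum _ s
        · intro p hp q hq a b ha hb hab
          simp only [Set.mem_setOf_eq] at hp hq ⊢
          simp [Finset.sum_add_distrib, ← Finset.mul_sum, hp, hq, hab]
    exact hsub hp
  -- min and max of g
  set m : ℝ := Finset.univ.inf' Finset.univ_nonempty g with hm
  set M : ℝ := Finset.univ.sup' Finset.univ_nonempty g with hM
  have hmle : ∀ y, m ≤ g y := fun y => Finset.inf'_le _ (Finset.mem_univ y)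
  have hleM : ∀ y, g y ≤ M := fun y => Finset.le_sup' _ (Finset.mem_univ y)
  have hAne : A.Nonempty := ⟨w x s0, subset_convexHull ℝ _ ⟨s0, rfl⟩⟩
  have hBne : B.Nonempty := ⟨w x' s0, subset_convexHull ℝ _ ⟨s0, rfl⟩⟩
  obtain ⟨a0, ha0⟩ := hAne
  obtain ⟨b0, hb0⟩ := hBne
  have hMm : m < M := by
    by_contra h
    push_neg at h
    have hconst : ∀ y, g y = m := fun y => le_antisymm ((hleM y).trans h) (hmle y)
    have hfa : f a0 = m := by
      rw [hrep, Finset.sum_congr rfl (fun y _ => by rw [hconst y]),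
        ← Finset.sum_mul, hsum1 a0 (Set.mem_union_left _ ha0), one_mul]
    have hfb : f b0 = m := by
      rw [hrep, Finset.sum_congr rfl (fun y _ => by rw [hconst y]),
        ← Finset.sum_mul, hsum1 b0 (Set.mem_union_right _ hb0), one_mul]
    have := (hfA a0 ha0).trans (huv.trans (hfB b0 hb0))
    rw [hfa, hfb] at this
    exact lt_irrefl _ this
  have hMm' : (0:ℝ) < M - m := by linarith
  -- the quantizer
  set Q : Y → Fin 2 → ℝ :=
    fun y b => if b = 0 then (g y - m) / (M - m) else 1 - (g y - m) / (M - m) with hQ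
  have hQ01 : ∀ y, 0 ≤ (g y - m) / (M - m) ∧ (g y - m) / (M - m) ≤ 1 := by
    intro y
    constructor
    · exact div_nonneg (by linarith [hmle y]) hMm'.le
    · rw [div_le_one hMm']; linarith [hleM y]
  refine ⟨Q, ?_, ?_, x, x', hxx, ?_⟩
  · intro y b
    rcases hQ01 y with ⟨h1, h2⟩
    simp only [hQ]
    split
    · exact h1
    · linarith
  · intro y; simp [hQ, Fin.sum_univ_two]
  · -- disjointness of quantized hulls
    -- the linear quantization map
    set T : (Y → ℝ) →ₗ[ℝ] (Fin 2 → ℝ) :=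
      { toFun := fun p b => ∑ y, p y * Q y b
        map_add' := by
          intro p q; ext b
          simp [add_mul, Finset.sum_add_distrib]
        map_smul' := by
          intro c p; ext b
          simp [mul_assoc, Finset.mul_sum] } with hT
    have hrangeA : (Set.range fun s : S => fun b : Fin 2 => ∑ y, w x s y * Q y b)
        = T '' (Set.range fun s : S => w x s) := by
      ext q; constructor
      · rintro ⟨s, rfl⟩; exact ⟨w x s, ⟨s, rfl⟩, rfl⟩
      · rintro ⟨p, ⟨s, rfl⟩, rfl⟩; exact ⟨s, rfl⟩
    have hrangeB : (Set.range fun s : S => fun b : Fin 2 => ∑ y, w x' s y * Q y b)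
        = T '' (Set.range fun s : S => w x' s) := by
      ext q; constructor
      · rintro ⟨s, rfl⟩; exact ⟨w x' s, ⟨s, rfl⟩, rfl⟩
      · rintro ⟨p, ⟨s, rfl⟩, rfl⟩; exact ⟨s, rfl⟩
    rw [hrangeA, hrangeB, ← T.image_convexHull, ← T.image_convexHull]
    rw [Set.eq_empty_iff_forall_notMem]
    rintro q ⟨⟨a, haA, rfl⟩, ⟨b, hbB, hTb⟩⟩
    -- compute the first coordinate
    have key : ∀ p : Y → ℝ, p ∈ A ∪ B → T p 0 = (f p - m) / (M - m) := by
      intro p hp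
      have : T p 0 = ∑ y, p y * ((g y - m) / (M - m)) := by
        simp [hT, hQ]
      rw [this, hrep]
      have : ∑ y, p y * ((g y - m) / (M - m))
          = ((∑ y, p y * g y) - m * ∑ y, p y) / (M - m) := by
        rw [Finset.mul_sum, ← Finset.sum_sub_distrib, Finset.sum_div]
        apply Finset.sum_congr rfl
        intro y _
        field_simp
      rw [this, hsum1 p hp, mul_one]
    have h1 : T a 0 = (f a - m) / (M - m) := key a (Set.mem_union_left _ haA)
    have h2 : T b 0 = (f b - m) / (M - m) := key b (Set.mem_union_right _ hbB)
    have hfab : f a < f b := (hfA a haA).trans (huv.trans (hfB b hbB))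
    have : T b 0 = T a 0 := by rw [hTb]
    rw [h1, h2] at this
    rw [div_eq_div_iff (ne_of_gt hMm') (ne_of_gt hMm')] at this
    have := mul_right_cancel₀ (ne_of_gt hMm') this
    linarith
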